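/- Let κ > 0 be a real number and define, for θ ∈ [0,π], g_κ(θ) = θ/κ − (π/κ) · (∫_0^θ e^{−κ cos φ} dφ) / (∫_0^π e^{−κ cos φ} dφ). Then g_κ(θ) > 0 for every θ ∈ (0,π). -/

import Mathlib

open Real intervalIntegral

/-- The explicit generalized collisional invariant in dimension 2:
`g_κ(θ) = θ/κ − (π/κ)·(∫_0^θ e^{−κcos φ} dφ)/(∫_0^π e^{−κcos φ} dφ)`. -/
noncomputable def gci2D (κ : ℝ) (θ : ℝ) : ℝ :=
  θ / κ - (π / κ) *
    (∫ φ in (0:ℝ)..θ, Real.exp (-(κ * Real.cos φ))) /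
    (∫ φ in (0:ℝ)..π, Real.exp (-(κ * Real.cos φ)))

/-- For `κ > 0`, the generalized collisional invariant `g_κ` is positive
on `(0,π)`. -/
theorem gci2D_pos (κ : ℝ) (hκ : 0 < κ) :
    ∀ θ ∈ Set.Ioo 0 π, 0 < gci2D κ θ := by
  intro θ hθ
  obtain ⟨hθ0, hθπ⟩ := hθ
  set f : ℝ → ℝ := fun φ => Real.exp (-(κ * Real.cos φ)) with hfdef
  have hfc : Continuous f := by continuity
  set F : ℝ → ℝ := fun t => ∫ φ in (0:ℝ)..t, f φ with hFdef
  have hFderiv : ∀ t : ℝ, HasDerivAt F (f t) t := fun t =>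
    (hfc.integral_hasStrictDerivAt 0 t).hasDerivAt
  have hFπ : 0 < F π :=
    intervalIntegral_pos_of_pos (hfc.intervalIntegrable 0 π)
      (fun x => Real.exp_pos _) Real.pi_pos
  set G : ℝ → ℝ := fun t => t * F π - π * F t with hGdef
  have hGderiv : ∀ t : ℝ, HasDerivAt G (F π - π * f t) t := fun t => by
    have := ((hasDerivAt_id t).mul_const (F π)).sub ((hFderiv t).const_mul π)
    simp at this; exact this
  -- f is strictly monotone on [0,π]
  have hfmono : StrictMonoOn f (Set.Icc 0 π) := by
    intro x hx y hy hxy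
    have := Real.strictAntiOn_cos hx hy hxy
    simp only [hfdef]
    exact Real.exp_lt_exp.2 (by nlinarith)
  have hanti : StrictAntiOn (deriv G) (interior (Set.Icc (0:ℝ) π)) := by
    intro x hx y hy hxy
    rw [interior_Icc] at hx hy
    rw [(hGderiv x).deriv, (hGderiv y).deriv]
    have := hfmono (Set.Ioo_subset_Icc_self hx) (Set.Ioo_subset_Icc_self hy) hxy
    nlinarith [Real.pi_pos]
  have hconc : StrictConcaveOn ℝ (Set.Icc (0:ℝ) π) G :=
    StrictAntiOn.strictConcaveOn_of_deriv (convex_Icc 0 π)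
      (fun t _ => ((hGderiv t).continuousAt).continuousWithinAt) hanti
  have hG0 : G 0 = 0 := by simp [hGdef, hFdef]
  have hGπ : G π = 0 := by simp [hGdef]
  have hab : (1 - θ/π) + θ/π = 1 := by ring
  have hπ : (0:ℝ) < π := Real.pi_pos
  have ha : 0 < 1 - θ/π := by
    have : θ/π < 1 := (div_lt_one hπ).2 hθπ
    linarith
  have hb : 0 < θ/π := div_pos hθ0 hπ
  have hGθ : 0 < G θ := by
    have := hconc.2 (Set.left_mem_Icc.2 hπ.le) (Set.right_mem_Icc.2 hπ.le)
      (ne_of_lt hπ) ha hb hab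
    have hx : (1 - θ/π) • (0:ℝ) + (θ/π) • π = θ := by
      field_simp
      simp [hπ.ne']
    rw [hx, hG0, hGπ] at this
    simpa using this
  have key : π * F θ < θ * F π := by
    have : 0 < θ * F π - π * F θ := hGθ
    linarith
  rw [gci2D, sub_pos]
  rw [div_lt_iff₀ hFπ]
  have hκ' : 0 < κ⁻¹ := inv_pos.2 hκ
  calc π / κ * F θ = κ⁻¹ * (π * F θ) := by ring
    _ < κ⁻¹ * (θ * F π) := by exact (mul_lt_mul_iff_right₀ hκ').2 key
    _ = θ / κ * F π := by ring
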